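/- arXiv:1802.10558 — 2 statements merged into one kernel-verified Lean document; each statement's English description precedes it below -/
import Mathlib

section
/- Sufficient decrease of the proximal-gradient step: let f : ℝⁿ → ℝ be differentiable with L-Lipschitz gradient, g : ℝⁿ → ℝ convex, τ > L, and x⁺ a minimizer of u ↦ g(u) + ⟨u − x, ∇f(x)⟩ + (τ/2)‖u − x‖². Then f(x⁺) + g(x⁺) ≤ f(x) + g(x) − ((τ − L)/2)‖x⁺ − x‖². -/
open RealInnerProductSpace

lemma descent_lemma_aux (n : ℕ)
    (f : EuclideanSpace ℝ (Fin n) → ℝ)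
    (f' : EuclideanSpace ℝ (Fin n) → EuclideanSpace ℝ (Fin n))
    (hf : ∀ x, HasGradientAt f (f' x) x)
    (L : ℝ) (hL : 0 ≤ L)
    (hlip : ∀ x y, ‖f' x - f' y‖ ≤ L * ‖x - y‖)
    (x y : EuclideanSpace ℝ (Fin n)) :
    f y ≤ f x + ⟪f' x, y - x⟫ + L / 2 * ‖y - x‖ ^ 2 := by
  set v := y - x with hv
  set c : ℝ → EuclideanSpace ℝ (Fin n) := fun t => x + t • v with hc
  have hcder : ∀ t : ℝ, HasDerivAt c v t := by
    intro t
    simpa [hc] using ((hasDerivAt_id t).smul_const v).const_add x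
  have hφ : ∀ t : ℝ, HasDerivAt (fun t => f (c t)) ⟪f' (c t), v⟫ t := by
    intro t
    have h1 := (hf (c t)).hasFDerivAt.comp_hasDerivAt t (hcder t)
    rw [InnerProductSpace.toDual_apply_apply] at h1
    exact h1
  set F : ℝ → ℝ := fun t => f x + t * ⟪f' x, v⟫ + L / 2 * t ^ 2 * ‖v‖ ^ 2 - f (c t)
    with hF
  have hFder : ∀ t : ℝ, HasDerivAt F
      (⟪f' x, v⟫ + L / 2 * (2 * t) * ‖v‖ ^ 2 - ⟪f' (c t), v⟫) t := by
    intro t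
    have h1 : HasDerivAt (fun t : ℝ => f x + t * ⟪f' x, v⟫ + L / 2 * t ^ 2 * ‖v‖ ^ 2)
        (⟪f' x, v⟫ + L / 2 * (2 * t) * ‖v‖ ^ 2) t := by
      have := (((hasDerivAt_pow 2 t).const_mul (L / 2)).mul_const (‖v‖ ^ 2))
      have h2 := ((hasDerivAt_id t).mul_const ⟪f' x, v⟫).const_add (f x)
      exact (h2.add this).congr_deriv (by simp)
    exact h1.sub (hφ t)
  have hFderiv : ∀ t : ℝ, deriv F t
      = ⟪f' x, v⟫ + L / 2 * (2 * t) * ‖v‖ ^ 2 - ⟪f' (c t), v⟫ := fun t => (hFder t).deriv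
  have hmono : MonotoneOn F (Set.Icc (0:ℝ) 1) := by
    apply monotoneOn_of_deriv_nonneg (convex_Icc 0 1)
    · exact ((Differentiable.continuous (fun t => (hFder t).differentiableAt)).continuousOn)
    · exact fun t _ => ((hFder t).differentiableAt).differentiableWithinAt
    · intro t ht
      rw [interior_Icc] at ht
      rw [hFderiv t]
      have h1 : ⟪f' x - f' (c t), v⟫ ≥ -(‖f' (c t) - f' x‖ * ‖v‖) := by
        have := abs_real_inner_le_norm (f' x - f' (c t)) v
        have hn : ‖f' x - f' (c t)‖ = ‖f' (c t) - f' x‖ := by rw [norm_sub_rev]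
        rw [hn] at this
        linarith [neg_abs_le ⟪f' x - f' (c t), v⟫]
      have h2 : ‖f' (c t) - f' x‖ ≤ L * (t * ‖v‖) := by
        have := hlip (c t) x
        simpa [hc, norm_smul, abs_of_nonneg ht.1.le] using this
      have h3 : ‖f' (c t) - f' x‖ * ‖v‖ ≤ L * t * ‖v‖ ^ 2 := by
        have := mul_le_mul_of_nonneg_right h2 (norm_nonneg v)
        nlinarith [norm_nonneg v]
      have h4 : ⟪f' x, v⟫ - ⟪f' (c t), v⟫ = ⟪f' x - f' (c t), v⟫ := by
        rw [inner_sub_left]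
      nlinarith
  have h01 := hmono (Set.left_mem_Icc.2 zero_le_one) (Set.right_mem_Icc.2 zero_le_one)
    zero_le_one
  have hc0 : c 0 = x := by simp [hc]
  have hc1 : c 1 = y := by simp [hc, hv]
  simp only [hF, hc0, hc1] at h01
  nlinarith [h01]

/-- Sufficient decrease of the proximal-gradient step: with f
differentiable with L-Lipschitz gradient, g convex, τ > L, and x⁺ a minimizer
of u ↦ g(u) + ⟨u − x, ∇f(x)⟩ + (τ/2)‖u − x‖², we have
f(x⁺) + g(x⁺) ≤ f(x) + g(x) − ((τ − L)/2)‖x⁺ − x‖². -/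
theorem prox_grad_sufficient_decrease (n : ℕ)
    (f g : EuclideanSpace ℝ (Fin n) → ℝ)
    (f' : EuclideanSpace ℝ (Fin n) → EuclideanSpace ℝ (Fin n))
    (hf : ∀ x, HasGradientAt f (f' x) x)
    (L : ℝ) (hL : 0 ≤ L)
    (hlip : ∀ x y, ‖f' x - f' y‖ ≤ L * ‖x - y‖)
    (hg : ConvexOn ℝ Set.univ g)
    (τ : ℝ) (hτ : L < τ)
    (x xplus : EuclideanSpace ℝ (Fin n))
    (hmin : ∀ u, g xplus + ⟪xplus - x, f' x⟫ + (τ / 2) * ‖xplus - x‖ ^ 2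
        ≤ g u + ⟪u - x, f' x⟫ + (τ / 2) * ‖u - x‖ ^ 2) :
    f xplus + g xplus ≤ f x + g x - ((τ - L) / 2) * ‖xplus - x‖ ^ 2 := by
  have hdesc := descent_lemma_aux n f f' hf L hL hlip x xplus
  have hmx := hmin x
  simp only [sub_self, inner_zero_left, norm_zero] at hmx
  have hsym : ⟪f' x, xplus - x⟫ = ⟪xplus - x, f' x⟫ := real_inner_comm _ _
  rw [hsym] at hdesc
  nlinarith [norm_nonneg (xplus - x)]
end

section
/- For the RBF kernel matrix K with entries K_{ij} = exp(−‖x_i − x_j‖²/(2σ²)), the gradient of J₁(X) = tr(K^{1/2}) with respect to X satisfies ∂J₁/∂X = (2/σ²)(XH − X ⊙ (BH)), where H = (1/2)K^{−1/2} ⊙ K, B is the d×n all-ones matrix, and ⊙ denotes the Hadamard product, assuming K is invertible. -/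
open scoped Matrix
open scoped Classical

attribute [local instance] Matrix.frobeniusNormedAddCommGroup Matrix.frobeniusNormedSpace

section

open scoped ComplexOrder

/-- The positive semidefinite square root of a positive semidefinite matrix
(the definition `Matrix.PosSemidef.sqrt` of the older Mathlib, since removed). -/
noncomputable def Matrix.PosSemidef.sqrt {𝕜 : Type*} [RCLike 𝕜] {n : Type*} [Fintype n]
    [DecidableEq n] {A : Matrix n n 𝕜} (hA : A.PosSemidef) : Matrix n n 𝕜 :=
  hA.1.eigenvectorUnitary.1 * Matrix.diagonal ((↑) ∘ (√·) ∘ hA.1.eigenvalues) *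
    (star hA.1.eigenvectorUnitary : Matrix n n 𝕜)

end

/-- The RBF kernel Gram matrix of the columns of `X`:
`K i j = exp(−‖x_i − x_j‖² / (2σ²))`. -/
noncomputable def rbfKernel {d n : ℕ} (σ : ℝ) (X : Matrix (Fin d) (Fin n) ℝ) :
    Matrix (Fin n) (Fin n) ℝ :=
  fun i j => Real.exp (-(∑ a, (X a i - X a j) ^ 2) / (2 * σ ^ 2))

/-- `tr(K^{1/2})` for a positive semidefinite matrix `K` (and `0` otherwise). -/
noncomputable def traceSqrt {n : ℕ} (K : Matrix (Fin n) (Fin n) ℝ) : ℝ :=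
  if h : K.PosSemidef then h.sqrt.trace else 0

/-- The linear functional `V ↦ Σ_{i,j} G_{ij} V_{ij} = tr(Gᵀ V)` (Frobenius pairing),
as a continuous linear map; a matrix `G` is the gradient of a functional `J` at `X`
precisely when this map is the Fréchet derivative of `J` at `X`. -/
noncomputable def frobPairing {d n : ℕ} (G : Matrix (Fin d) (Fin n) ℝ) :
    Matrix (Fin d) (Fin n) ℝ →L[ℝ] ℝ :=
  LinearMap.toContinuousLinearMap
    { toFun := fun V => ∑ i, ∑ j, G i j * V i j
      map_add' := by
        intro V W
        simp [mul_add, Finset.sum_add_distrib]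
      map_smul' := by
        intro c V
        simp [Finset.mul_sum, Matrix.smul_apply, mul_left_comm] }

section SqrtAux

open scoped MatrixOrder

lemma Matrix.PosSemidef.sqrt_eq_cfcSqrt {m : Type*} [Fintype m] [DecidableEq m]
    {A : Matrix m m ℝ} (hA : A.PosSemidef) : hA.sqrt = CFC.sqrt A := by
  rw [CFC.sqrt_eq_real_sqrt A ((Matrix.nonneg_iff_posSemidef).mpr hA), cfcₙ_eq_cfc, hA.1.cfc_eq,
    Matrix.IsHermitian.cfc, Unitary.conjStarAlgAut_apply]
  rfl

lemma Matrix.PosSemidef.posSemidef_sqrt {m : Type*} [Fintype m] [DecidableEq m]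
    {A : Matrix m m ℝ} (hA : A.PosSemidef) : hA.sqrt.PosSemidef := by
  rw [hA.sqrt_eq_cfcSqrt]
  exact (Matrix.nonneg_iff_posSemidef).mp (CFC.sqrt_nonneg A)

lemma Matrix.PosSemidef.sq_sqrt {m : Type*} [Fintype m] [DecidableEq m]
    {A : Matrix m m ℝ} (hA : A.PosSemidef) : hA.sqrt ^ 2 = A := by
  rw [hA.sqrt_eq_cfcSqrt]
  exact CFC.sq_sqrt A ((Matrix.nonneg_iff_posSemidef).mpr hA)

lemma Matrix.PosSemidef.eq_sqrt_of_sq_eq {m : Type*} [Fintype m] [DecidableEq m]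
    {A B : Matrix m m ℝ} (hB : B.PosSemidef) (hA : A.PosSemidef) (h : B ^ 2 = A) :
    B = hA.sqrt := by
  rw [hA.sqrt_eq_cfcSqrt]
  exact (CFC.sqrt_unique (by rw [← h, pow_two]) ((Matrix.nonneg_iff_posSemidef).mpr hB)).symm

end SqrtAux

namespace GradAux

variable {d n : ℕ}

/-! ### Basic symmetry facts -/

lemma rbf_symm (σ : ℝ) (Y : Matrix (Fin d) (Fin n) ℝ) :
    (rbfKernel σ Y)ᵀ = rbfKernel σ Y := by
  ext i j
  show Real.exp (-(∑ a, (Y a j - Y a i) ^ 2) / (2 * σ ^ 2))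
      = Real.exp (-(∑ a, (Y a i - Y a j) ^ 2) / (2 * σ ^ 2))
  congr 2
  apply congrArg
  exact Finset.sum_congr rfl fun a _ => by ring

lemma isHermitian_iff_transpose (C : Matrix (Fin n) (Fin n) ℝ) :
    C.IsHermitian ↔ Cᵀ = C := by
  unfold Matrix.IsHermitian
  rw [show Cᴴ = Cᵀ from by ext i j; simp [Matrix.conjTranspose_apply]]

/-! ### Entry bound for the Frobenius norm -/

lemma abs_entry_le_frobenius {p q : ℕ} (A : Matrix (Fin p) (Fin q) ℝ) (i : Fin p) (j : Fin q) :
    |A i j| ≤ ‖A‖ := by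
  rw [Matrix.frobenius_norm_def]
  have hnn : ∀ (i' : Fin p) (j' : Fin q), (0:ℝ) ≤ ‖A i' j'‖ ^ (2:ℝ) :=
    fun _ _ => Real.rpow_nonneg (norm_nonneg _) _
  have h1 : ‖A i j‖ ^ (2:ℝ) ≤ ∑ i', ∑ j', ‖A i' j'‖ ^ (2:ℝ) :=
    le_trans (Finset.single_le_sum (fun j' _ => hnn i j') (Finset.mem_univ j))
      (Finset.single_le_sum (fun i' _ => Finset.sum_nonneg fun j' _ => hnn i' j')
        (Finset.mem_univ i))
  have h2 : (‖A i j‖ ^ (2:ℝ)) ^ (1/2 : ℝ) = |A i j| := by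
    rw [← Real.rpow_mul (norm_nonneg _)]
    norm_num [Real.norm_eq_abs]
  calc |A i j| = (‖A i j‖ ^ (2:ℝ)) ^ (1/2 : ℝ) := h2.symm
    _ ≤ (∑ i', ∑ j', ‖A i' j'‖ ^ (2:ℝ)) ^ (1/2 : ℝ) :=
        Real.rpow_le_rpow (hnn i j) h1 (by norm_num)

/-! ### Spectral preparation -/

lemma spectral_prep {A : Matrix (Fin n) (Fin n) ℝ} (hH : A.IsHermitian) :
    ∃ U : Matrix (Fin n) (Fin n) ℝ, U * Uᵀ = 1 ∧ Uᵀ * U = 1 ∧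
      A = U * Matrix.diagonal hH.eigenvalues * Uᵀ := by
  refine ⟨(Matrix.IsHermitian.eigenvectorUnitary hH : Matrix (Fin n) (Fin n) ℝ), ?_, ?_, ?_⟩
  · have := (Matrix.mem_unitaryGroup_iff).mp (Matrix.IsHermitian.eigenvectorUnitary hH).2
    rwa [Matrix.star_eq_conjTranspose, Matrix.conjTranspose_eq_transpose_of_trivial] at this
  · have := (Matrix.mem_unitaryGroup_iff').mp (Matrix.IsHermitian.eigenvectorUnitary hH).2
    rwa [Matrix.star_eq_conjTranspose, Matrix.conjTranspose_eq_transpose_of_trivial] at this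
  · have := hH.spectral_theorem
    rw [Unitary.conjStarAlgAut_apply, Matrix.star_eq_conjTranspose,
      Matrix.conjTranspose_eq_transpose_of_trivial,
      RCLike.ofReal_real_eq_id] at this
    simpa using this

/-! ### Quadratic form bounds -/

lemma quad_lower_bound {A : Matrix (Fin n) (Fin n) ℝ} (hA : A.PosDef) :
    ∃ c > 0, ∀ x : Fin n → ℝ, c * (∑ i, x i ^ 2) ≤ x ⬝ᵥ A *ᵥ x := by
  rcases Nat.eq_zero_or_pos n with hn | hn
  · subst hn
    exact ⟨1, one_pos, fun x => by simp [dotProduct]⟩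
  obtain ⟨U, hU, hU', hspect⟩ := spectral_prep hA.1
  obtain ⟨i₀, -, hi₀⟩ := Finset.exists_min_image Finset.univ hA.1.eigenvalues
    ⟨⟨0, hn⟩, Finset.mem_univ _⟩
  refine ⟨hA.1.eigenvalues i₀, hA.eigenvalues_pos i₀, fun x => ?_⟩
  set ev := hA.1.eigenvalues with hev
  set y := Uᵀ *ᵥ x with hy
  have hxy : U *ᵥ y = x := by
    rw [hy, Matrix.mulVec_mulVec, hU, Matrix.one_mulVec]
  have hAx : x ⬝ᵥ A *ᵥ x = ∑ i, ev i * y i ^ 2 := by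
    have e1 : A *ᵥ x = U *ᵥ (Matrix.diagonal ev *ᵥ y) := by
      rw [hspect, hy, Matrix.mulVec_mulVec, Matrix.mulVec_mulVec, Matrix.mul_assoc]
    rw [e1, Matrix.dotProduct_mulVec, ← Matrix.mulVec_transpose, ← hy]
    simp only [dotProduct, Matrix.mulVec_diagonal]
    exact Finset.sum_congr rfl fun i _ => by ring
  have hsum : ∑ i, y i ^ 2 = ∑ i, x i ^ 2 := by
    have h1 : y ⬝ᵥ y = x ⬝ᵥ x := by
      conv_lhs => rw [hy, Matrix.dotProduct_mulVec, Matrix.vecMul_transpose, hxy]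
    simpa [dotProduct, sq] using h1
  rw [hAx, ← hsum, Finset.mul_sum]
  refine Finset.sum_le_sum fun i _ => ?_
  have h1 : ev i₀ ≤ ev i := hi₀ i (Finset.mem_univ i)
  nlinarith [sq_nonneg (y i)]

lemma quad_upper_bound (M : Matrix (Fin n) (Fin n) ℝ) (x : Fin n → ℝ) :
    |x ⬝ᵥ M *ᵥ x| ≤ ‖M‖ * n * ∑ i, x i ^ 2 := by
  have key : ∀ i j, |x i * (M i j * x j)| ≤ ‖M‖ * ((x i ^ 2 + x j ^ 2) / 2) := by
    intro i j
    have hM := abs_entry_le_frobenius M i j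
    have h2 : |x i| * |x j| ≤ (x i ^ 2 + x j ^ 2) / 2 := by
      nlinarith [sq_abs (x i), sq_abs (x j), sq_nonneg (|x i| - |x j|)]
    calc |x i * (M i j * x j)| = |M i j| * (|x i| * |x j|) := by
          rw [abs_mul, abs_mul]; ring
      _ ≤ ‖M‖ * ((x i ^ 2 + x j ^ 2) / 2) :=
          mul_le_mul hM h2 (by positivity) ((abs_nonneg _).trans hM)
  calc |x ⬝ᵥ M *ᵥ x| = |∑ i, ∑ j, x i * (M i j * x j)| := by
        simp [dotProduct, Matrix.mulVec, Finset.mul_sum]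
    _ ≤ ∑ i, ∑ j, |x i * (M i j * x j)| :=
        le_trans (Finset.abs_sum_le_sum_abs _ _)
          (Finset.sum_le_sum fun i _ => Finset.abs_sum_le_sum_abs _ _)
    _ ≤ ∑ i, ∑ j, ‖M‖ * ((x i ^ 2 + x j ^ 2) / 2) :=
        Finset.sum_le_sum fun i _ => Finset.sum_le_sum fun j _ => key i j
    _ = ‖M‖ * n * ∑ i, x i ^ 2 := by
        simp only [← Finset.mul_sum]
        rw [mul_assoc]
        congr 1
        have : ∀ i : Fin n, ∑ j : Fin n, (x i ^ 2 + x j ^ 2) / 2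
            = ((n : ℝ) * x i ^ 2 + ∑ j, x j ^ 2) / 2 := by
          intro i
          rw [← Finset.sum_div]
          congr 1
          simp [Finset.sum_add_distrib, Finset.card_univ]
        rw [Finset.sum_congr rfl fun i _ => this i, ← Finset.sum_div,
          Finset.sum_add_distrib, ← Finset.mul_sum]
        simp only [Finset.sum_const, Finset.card_univ, Fintype.card_fin, nsmul_eq_mul]
        ring

/-- Positive definiteness is an open condition among Hermitian matrices. -/
lemma eventually_posDef {A : Matrix (Fin n) (Fin n) ℝ} (hA : A.PosDef) :
    ∀ᶠ C in nhds A, C.IsHermitian → C.PosDef := by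
  obtain ⟨c, hc, hquad⟩ := quad_lower_bound hA
  have hε : (0:ℝ) < c / (2 * (n + 1)) := by positivity
  filter_upwards [Metric.ball_mem_nhds A hε] with C hC hherm
  refine Matrix.PosDef.of_dotProduct_mulVec_pos hherm fun x hx => ?_
  have hdist : ‖C - A‖ < c / (2 * (n + 1)) := by
    rw [← dist_eq_norm]; exact hC
  set S := ∑ i, x i ^ 2 with hS
  have hSpos : 0 < S := by
    obtain ⟨i, hi⟩ := Function.ne_iff.mp hx
    exact Finset.sum_pos' (fun j _ => sq_nonneg _) ⟨i, Finset.mem_univ i, by exact pow_two_pos_of_ne_zero hi⟩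
  have hsplit : x ⬝ᵥ C *ᵥ x = x ⬝ᵥ A *ᵥ x + x ⬝ᵥ (C - A) *ᵥ x := by
    rw [Matrix.sub_mulVec, dotProduct_sub]; ring
  have hupper := quad_upper_bound (C - A) x
  have h6 : ‖C - A‖ * ((n:ℝ) * S) ≤ (c / (2 * (n + 1))) * ((n:ℝ) * S) :=
    mul_le_mul_of_nonneg_right hdist.le (by positivity)
  have h7 : (c / (2 * (n + 1))) * (n:ℝ) ≤ c / 2 := by
    rw [div_mul_eq_mul_div, div_le_div_iff₀ (by positivity) (by norm_num)]
    have hn0 : (0:ℝ) ≤ (n:ℝ) := Nat.cast_nonneg n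
    nlinarith
  have h8 : (c / (2 * (n + 1))) * ((n:ℝ) * S) ≤ (c/2) * S := by
    have := mul_le_mul_of_nonneg_right h7 hSpos.le
    calc (c / (2 * (n + 1))) * ((n:ℝ) * S) = (c / (2 * (n + 1))) * (n:ℝ) * S := by ring
      _ ≤ (c/2) * S := this
  have habs : -(‖C - A‖ * (n:ℝ) * S) ≤ x ⬝ᵥ (C - A) *ᵥ x := by
    have := neg_abs_le (x ⬝ᵥ (C - A) *ᵥ x)
    linarith
  have hfin : 0 < x ⬝ᵥ C *ᵥ x := by nlinarith [hquad x]
  have hstar : star x = x := by funext i; simp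
  rw [hstar]
  exact hfin

lemma posDef_of_isUnit_det {A : Matrix (Fin n) (Fin n) ℝ} (hA : A.PosSemidef)
    (h : IsUnit A.det) : A.PosDef := by
  refine Matrix.PosDef.of_dotProduct_mulVec_pos hA.1 fun x hx => ?_
  rcases lt_or_eq_of_le (hA.dotProduct_mulVec_nonneg x) with hlt | heq
  · exact hlt
  · exfalso
    have h0 : A *ᵥ x = 0 := (hA.dotProduct_mulVec_zero_iff x).mp heq.symm
    have : x = 0 := by
      have := congrArg (fun v => A⁻¹ *ᵥ v) h0
      simpa [Matrix.mulVec_mulVec, Matrix.nonsing_inv_mul A h] using this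
    exact hx this

/-! ### The Sylvester operator -/

lemma sylvester_injective {A : Matrix (Fin n) (Fin n) ℝ} (hA : A.PosDef)
    (H : Matrix (Fin n) (Fin n) ℝ) (hH : A * H + H * A = 0) : H = 0 := by
  obtain ⟨U, hU, hU', hspect⟩ := spectral_prep hA.1
  set ev := hA.1.eigenvalues with hev
  set D := Matrix.diagonal ev with hD
  set N := Uᵀ * H * U with hN
  have hDU : Uᵀ * A * U = D := by
    rw [hspect]
    calc Uᵀ * (U * D * Uᵀ) * U = (Uᵀ * U) * D * (Uᵀ * U) := by noncomm_ring
      _ = D := by rw [hU']; simp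
  have key : ∀ B C : Matrix (Fin n) (Fin n) ℝ,
      (Uᵀ * B * U) * (Uᵀ * C * U) = Uᵀ * (B * C) * U := by
    intro B C
    have h1 : (Uᵀ * B * U) * (Uᵀ * C * U) = Uᵀ * B * (U * Uᵀ) * (C * U) := by noncomm_ring
    rw [h1, hU]
    noncomm_ring
  have hDN : D * N + N * D = 0 := by
    have h2 : Uᵀ * (A * H + H * A) * U = D * N + N * D := by
      rw [Matrix.mul_add, Matrix.add_mul, ← key A H, ← key H A, hDU]
    rw [hH] at h2
    rw [← h2]
    simp
  have hN0 : N = 0 := by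
    ext i j
    have h3 : (D * N + N * D) i j = (0 : Matrix (Fin n) (Fin n) ℝ) i j := by rw [hDN]
    simp only [Matrix.add_apply, hD, Matrix.diagonal_mul, Matrix.mul_diagonal,
      Matrix.zero_apply] at h3
    have hpos : 0 < ev i + ev j := add_pos (hA.eigenvalues_pos i) (hA.eigenvalues_pos j)
    have h4 : (ev i + ev j) * N i j = 0 := by linarith [h3]
    simpa using (mul_eq_zero.mp h4).resolve_left (ne_of_gt hpos)
  have h5 : U * N * Uᵀ = H := by
    calc U * (Uᵀ * H * U) * Uᵀ = (U * Uᵀ) * H * (U * Uᵀ) := by noncomm_ring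
      _ = H := by rw [hU]; simp
  rw [hN0] at h5
  simpa using h5.symm

/-- Matrix multiplication as a continuous bilinear map. -/
noncomputable def mulCLM :
    Matrix (Fin n) (Fin n) ℝ →L[ℝ] Matrix (Fin n) (Fin n) ℝ →L[ℝ] Matrix (Fin n) (Fin n) ℝ :=
  LinearMap.toContinuousLinearMap
    { toFun := fun A => LinearMap.toContinuousLinearMap
        { toFun := fun B => A * B
          map_add' := fun B C => mul_add A B C
          map_smul' := fun c B => mul_smul_comm c A B }
      map_add' := by intro A B; ext C; simp [add_mul]
      map_smul' := by intro c A; ext B; simp [smul_mul_assoc] }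

@[simp] lemma mulCLM_apply (A B : Matrix (Fin n) (Fin n) ℝ) : mulCLM A B = A * B := rfl

/-- The Sylvester operator `H ↦ A H + H A` as a linear equivalence, for `A` positive
definite. -/
noncomputable def sylvesterEquiv {A : Matrix (Fin n) (Fin n) ℝ} (hA : A.PosDef) :
    Matrix (Fin n) (Fin n) ℝ ≃L[ℝ] Matrix (Fin n) (Fin n) ℝ :=
  LinearEquiv.toContinuousLinearEquiv
    (LinearEquiv.ofBijective
      { toFun := fun H => A * H + H * A
        map_add' := by intro H₁ H₂; noncomm_ring
        map_smul' := by intro c H; simp [Matrix.mul_smul, Matrix.smul_mul, smul_add] }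
      (by
        have hinj : Function.Injective
            (fun H : Matrix (Fin n) (Fin n) ℝ => A * H + H * A) := by
          intro H₁ H₂ h
          have := sylvester_injective hA (H₁ - H₂) (by
            simp only [Matrix.mul_sub, Matrix.sub_mul]
            rw [sub_add_sub_comm]
            simpa [sub_eq_zero] using h)
          simpa [sub_eq_zero] using this
        exact ⟨hinj, (LinearMap.injective_iff_surjective
          (f := ({ toFun := fun H => A * H + H * A
                   map_add' := by intro H₁ H₂; noncomm_ring
                   map_smul' := by intro c H; simp [Matrix.mul_smul, Matrix.smul_mul, smul_add] }
                    : Matrix (Fin n) (Fin n) ℝ →ₗ[ℝ] Matrix (Fin n) (Fin n) ℝ))).mp hinj⟩))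

@[simp] lemma sylvesterEquiv_apply {A : Matrix (Fin n) (Fin n) ℝ} (hA : A.PosDef)
    (H : Matrix (Fin n) (Fin n) ℝ) : sylvesterEquiv hA H = A * H + H * A := rfl

lemma hasStrictFDerivAt_sq {A : Matrix (Fin n) (Fin n) ℝ} (hA : A.PosDef) :
    HasStrictFDerivAt (fun C : Matrix (Fin n) (Fin n) ℝ => C * C)
      (sylvesterEquiv hA : Matrix (Fin n) (Fin n) ℝ →L[ℝ] Matrix (Fin n) (Fin n) ℝ) A := by
  have h := (mulCLM (n := n)).hasStrictFDerivAt_of_bilinear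
    (hasStrictFDerivAt_id A) (hasStrictFDerivAt_id A)
  exact h.congr_fderiv (by ext B : 1; rfl)

/-! ### Derivative of the kernel map -/

/-- The derivative of `Y ↦ rbfKernel σ Y` at `X`, as a linear map. -/
noncomputable def kernDerivLM (σ : ℝ) (X : Matrix (Fin d) (Fin n) ℝ) :
    Matrix (Fin d) (Fin n) ℝ →ₗ[ℝ] Matrix (Fin n) (Fin n) ℝ where
  toFun V := Matrix.of fun i j =>
    rbfKernel σ X i j * (-(σ ^ 2)⁻¹ * ∑ a, (X a i - X a j) * (V a i - V a j))
  map_add' V W := by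
    ext i j
    simp only [Matrix.of_apply, Matrix.add_apply]
    rw [← mul_add]
    congr 1
    rw [← mul_add, ← Finset.sum_add_distrib]
    congr 1
    apply Finset.sum_congr rfl
    intro a _
    ring
  map_smul' c V := by
    ext i j
    have h : (∑ a, (X a i - X a j) * ((c • V) a i - (c • V) a j))
        = c * ∑ a, (X a i - X a j) * (V a i - V a j) := by
      rw [Finset.mul_sum]
      refine Finset.sum_congr rfl fun a _ => ?_
      simp only [Matrix.smul_apply, smul_eq_mul]
      ring
    show rbfKernel σ X i j * (-(σ ^ 2)⁻¹ * ∑ a, (X a i - X a j) * ((c • V) a i - (c • V) a j))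
        = c * (rbfKernel σ X i j * (-(σ ^ 2)⁻¹ * ∑ a, (X a i - X a j) * (V a i - V a j)))
    rw [h]; ring

noncomputable def kernDeriv (σ : ℝ) (X : Matrix (Fin d) (Fin n) ℝ) :
    Matrix (Fin d) (Fin n) ℝ →L[ℝ] Matrix (Fin n) (Fin n) ℝ :=
  LinearMap.toContinuousLinearMap (kernDerivLM σ X)

@[simp] lemma kernDeriv_apply (σ : ℝ) (X V : Matrix (Fin d) (Fin n) ℝ) (i j : Fin n) :
    kernDeriv σ X V i j =
      rbfKernel σ X i j * (-(σ ^ 2)⁻¹ * ∑ a, (X a i - X a j) * (V a i - V a j)) := rfl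

/-- The identity, as a continuous linear equivalence between the matrix space (with the
Frobenius norm) and the corresponding pi type (with the sup norm). -/
noncomputable def matPiEquiv :
    Matrix (Fin n) (Fin n) ℝ ≃L[ℝ] (Fin n → Fin n → ℝ) :=
  LinearEquiv.toContinuousLinearEquiv
    { toFun := fun A i j => A i j
      invFun := fun f => Matrix.of f
      map_add' := fun _ _ => rfl
      map_smul' := fun _ _ => rfl
      left_inv := fun _ => rfl
      right_inv := fun _ => rfl }

@[simp] lemma matPiEquiv_apply (A : Matrix (Fin n) (Fin n) ℝ) (i j : Fin n) :
    matPiEquiv A i j = A i j := rfl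

/-- The linear functional `V ↦ V a i - V a j`. -/
noncomputable def entryDiff (a : Fin d) (i j : Fin n) :
    Matrix (Fin d) (Fin n) ℝ →L[ℝ] ℝ :=
  LinearMap.toContinuousLinearMap
    { toFun := fun V => V a i - V a j
      map_add' := by intro V W; simp [Matrix.add_apply]; ring
      map_smul' := by intro c V; simp [Matrix.smul_apply]; ring }

@[simp] lemma entryDiff_apply (a : Fin d) (i j : Fin n) (V : Matrix (Fin d) (Fin n) ℝ) :
    entryDiff a i j V = V a i - V a j := rfl

lemma hasFDerivAt_rbf (σ : ℝ) (hσ : 0 < σ) (X : Matrix (Fin d) (Fin n) ℝ) :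
    HasFDerivAt (rbfKernel σ) (kernDeriv σ X) X := by
  have hσ2 : σ ^ 2 ≠ 0 := by positivity
  refine (matPiEquiv.comp_hasFDerivAt_iff).mp ?_
  refine hasFDerivAt_pi'.mpr fun i => ?_
  refine hasFDerivAt_pi'.mpr fun j => ?_
  have hLa : ∀ a : Fin d, HasFDerivAt (fun Y : Matrix (Fin d) (Fin n) ℝ => Y a i - Y a j)
      (entryDiff a i j) X := fun a => (entryDiff a i j).hasFDerivAt
  have hφ := HasFDerivAt.sum (fun a (_ : a ∈ Finset.univ) => (hLa a).mul (hLa a))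
  have hu := hφ.const_mul (-(2 * σ ^ 2)⁻¹)
  have he := hu.exp
  have hfun : (fun Y : Matrix (Fin d) (Fin n) ℝ => (matPiEquiv (rbfKernel σ Y)) i j)
      = (fun Y : Matrix (Fin d) (Fin n) ℝ =>
          Real.exp (-(2 * σ ^ 2)⁻¹ * ∑ a, (Y a i - Y a j) * (Y a i - Y a j))) := by
    funext Y
    show Real.exp _ = Real.exp _
    congr 1
    rw [show (∑ a, (Y a i - Y a j) * (Y a i - Y a j)) = ∑ a, (Y a i - Y a j) ^ 2 from
      Finset.sum_congr rfl fun a _ => by ring]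
    ring
  show HasFDerivAt (fun Y : Matrix (Fin d) (Fin n) ℝ => (matPiEquiv (rbfKernel σ Y)) i j) _ X
  rw [hfun]
  simp only [Finset.sum_apply, Pi.mul_apply] at he
  refine he.congr_fderiv ?_
  ext V
  have hE : rbfKernel σ X i j
      = Real.exp (-(2 * σ ^ 2)⁻¹ * ∑ a, (X a i - X a j) * (X a i - X a j)) := by
    show Real.exp _ = Real.exp _
    rw [Finset.mul_sum]
    rw [show (∑ a, (X a i - X a j) ^ 2) = ∑ a, (X a i - X a j) * (X a i - X a j) from
      Finset.sum_congr rfl fun a _ => sq (X a i - X a j) ▸ by ring]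
    rw [← Finset.mul_sum]
    congr 1
    ring
  simp only [ContinuousLinearMap.coe_comp', Function.comp_apply,
    ContinuousLinearMap.proj_apply, ContinuousLinearEquiv.coe_coe, matPiEquiv_apply,
    kernDeriv_apply, ContinuousLinearMap.smul_apply, ContinuousLinearMap.coe_sum',
    Finset.sum_apply, entryDiff_apply, smul_eq_mul, hE]
  simp only [ContinuousLinearMap.add_apply, ContinuousLinearMap.smul_apply, entryDiff_apply,
    smul_eq_mul]
  change Real.exp (-(2 * σ ^ 2)⁻¹ * ∑ a, (X a i - X a j) * (X a i - X a j)) *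
      (-(2 * σ ^ 2)⁻¹ * ∑ a, ((X a i - X a j) * (V a i - V a j) + (X a i - X a j) * (V a i - V a j)))
    = rbfKernel σ X i j * (-(σ ^ 2)⁻¹ * ∑ a, (X a i - X a j) * (V a i - V a j))
  rw [hE]
  rw [show ∑ a, ((X a i - X a j) * (V a i - V a j) + (X a i - X a j) * (V a i - V a j))
      = 2 * ∑ a, (X a i - X a j) * (V a i - V a j) by
    rw [Finset.mul_sum]; exact Finset.sum_congr rfl fun a _ => by ring]
  field_simp

/-! ### Trace identity -/

lemma trace_sylvester_symm {A : Matrix (Fin n) (Fin n) ℝ} (hA : A.PosDef)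
    (M : Matrix (Fin n) (Fin n) ℝ) :
    ((sylvesterEquiv hA).symm M).trace = (1 / 2) * (A⁻¹ * M).trace := by
  set Hm := (sylvesterEquiv hA).symm M with hHm
  have hM : A * Hm + Hm * A = M := by
    have h := (sylvesterEquiv hA).apply_symm_apply M
    rwa [sylvesterEquiv_apply] at h
  have hdet : IsUnit A.det := hA.det_pos.ne'.isUnit
  have h1 : A⁻¹ * M = Hm + A⁻¹ * (Hm * A) := by
    rw [← hM, Matrix.mul_add, ← Matrix.mul_assoc, Matrix.nonsing_inv_mul A hdet, Matrix.one_mul]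
  have h2 : (A⁻¹ * (Hm * A)).trace = Hm.trace := by
    rw [Matrix.trace_mul_comm, Matrix.mul_assoc, Matrix.mul_nonsing_inv A hdet, Matrix.mul_one]
  rw [h1, Matrix.trace_add, h2]
  ring

lemma sum_identity (W : Matrix (Fin n) (Fin n) ℝ) (hW : ∀ i j, W i j = W j i)
    (X V : Matrix (Fin d) (Fin n) ℝ) :
    ∑ i, ∑ j, W i j * ∑ a, (X a i - X a j) * (V a i - V a j)
      = 2 * ∑ a, ∑ i, (X a i * (∑ j, W i j) - ∑ j, W i j * X a j) * V a i := by
  have step1 : ∑ i, ∑ j, W i j * ∑ a, (X a i - X a j) * (V a i - V a j)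
      = ∑ i, ∑ j, ∑ a, (W i j * (X a i * V a i) - W i j * (X a i * V a j)
          - W i j * (X a j * V a i) + W i j * (X a j * V a j)) := by
    refine Finset.sum_congr rfl fun i _ => Finset.sum_congr rfl fun j _ => ?_
    rw [Finset.mul_sum]
    exact Finset.sum_congr rfl fun a _ => by ring
  have swap1 : (∑ i, ∑ j, ∑ a, W i j * (X a j * V a j))
      = ∑ i, ∑ j, ∑ a, W i j * (X a i * V a i) := by
    rw [Finset.sum_comm]
    exact Finset.sum_congr rfl fun j _ => Finset.sum_congr rfl fun i _ =>
      Finset.sum_congr rfl fun a _ => by rw [hW]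
  have swap2 : (∑ i, ∑ j, ∑ a, W i j * (X a i * V a j))
      = ∑ i, ∑ j, ∑ a, W i j * (X a j * V a i) := by
    rw [Finset.sum_comm]
    exact Finset.sum_congr rfl fun j _ => Finset.sum_congr rfl fun i _ =>
      Finset.sum_congr rfl fun a _ => by rw [hW]
  have reorder : ∀ f : Fin d → Fin n → Fin n → ℝ,
      ∑ a, ∑ i, ∑ j, f a i j = ∑ i, ∑ j, ∑ a, f a i j := by
    intro f
    rw [Finset.sum_comm]
    exact Finset.sum_congr rfl fun i _ => Finset.sum_comm
  have rhs1 : ∑ a, ∑ i, (X a i * (∑ j, W i j) - ∑ j, W i j * X a j) * V a i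
      = (∑ i, ∑ j, ∑ a, W i j * (X a i * V a i))
        - ∑ i, ∑ j, ∑ a, W i j * (X a j * V a i) := by
    have e1 : ∀ (a : Fin d) (i : Fin n), (X a i * (∑ j, W i j) - ∑ j, W i j * X a j) * V a i
        = ∑ j, (W i j * (X a i * V a i) - W i j * (X a j * V a i)) := by
      intro a i
      rw [Finset.sum_sub_distrib, sub_mul]
      congr 1
      · rw [Finset.mul_sum, Finset.sum_mul]
        exact Finset.sum_congr rfl fun j _ => by ring
      · rw [Finset.sum_mul]
        exact Finset.sum_congr rfl fun j _ => by ring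
    calc ∑ a, ∑ i, (X a i * (∑ j, W i j) - ∑ j, W i j * X a j) * V a i
        = ∑ a, ∑ i, ∑ j, (W i j * (X a i * V a i) - W i j * (X a j * V a i)) :=
          Finset.sum_congr rfl fun a _ => Finset.sum_congr rfl fun i _ => e1 a i
      _ = (∑ i, ∑ j, ∑ a, W i j * (X a i * V a i))
            - ∑ i, ∑ j, ∑ a, W i j * (X a j * V a i) := by
          simp only [Finset.sum_sub_distrib]
          rw [reorder, reorder]
  rw [step1]
  simp only [Finset.sum_add_distrib, Finset.sum_sub_distrib]
  rw [rhs1]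
  linarith [swap1, swap2]

end GradAux

/-- for the RBF kernel matrix `K(X)` (assumed positive definite),
the gradient of `J₁(X) = tr(K(X)^{1/2})` is
`(2/σ²)(XH − X ⊙ (BH))` with `H = (1/2) K^{−1/2} ⊙ K` and `B` the all-ones matrix. -/
theorem gradient_trace_sqrt_rbf {d n : ℕ} (σ : ℝ) (hσ : 0 < σ)
    (X : Matrix (Fin d) (Fin n) ℝ)
    (hK : (rbfKernel σ X).PosDef) :
    HasFDerivAt (fun Y : Matrix (Fin d) (Fin n) ℝ => traceSqrt (rbfKernel σ Y))
      (frobPairing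
        ((2 / σ ^ 2) •
          (X * ((1 / 2 : ℝ) • ((hK.posSemidef.sqrt)⁻¹ ⊙ rbfKernel σ X))
            - X ⊙ ((Matrix.of fun _ _ => (1 : ℝ) : Matrix (Fin d) (Fin n) ℝ)
                * ((1 / 2 : ℝ) • ((hK.posSemidef.sqrt)⁻¹ ⊙ rbfKernel σ X))))))
      X := by
  classical
  set K := rbfKernel σ X with hKdef
  set A₀ := hK.posSemidef.sqrt with hA₀def
  have hA₀psd : A₀.PosSemidef := hK.posSemidef.posSemidef_sqrt
  have hsq : A₀ * A₀ = K := by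
    have h := hK.posSemidef.sq_sqrt
    rwa [pow_two] at h
  have hdetA₀ : IsUnit A₀.det := by
    have h1 : A₀.det * A₀.det = K.det := by rw [← Matrix.det_mul, hsq]
    refine isUnit_iff_ne_zero.mpr fun h0 => ?_
    rw [h0, mul_zero] at h1
    exact hK.det_pos.ne' h1.symm
  have hA₀pd : A₀.PosDef := GradAux.posDef_of_isUnit_det hA₀psd hdetA₀
  have hA₀sym : A₀ᵀ = A₀ := (GradAux.isHermitian_iff_transpose A₀).mp hA₀psd.1
  set Leq := GradAux.sylvesterEquiv hA₀pd with hLeq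
  have hsqd : HasStrictFDerivAt (fun C : Matrix (Fin n) (Fin n) ℝ => C * C)
      (Leq : Matrix (Fin n) (Fin n) ℝ →L[ℝ] Matrix (Fin n) (Fin n) ℝ) A₀ :=
    GradAux.hasStrictFDerivAt_sq hA₀pd
  set g := hsqd.localInverse _ _ _ with hg
  have hglocal : HasStrictFDerivAt g
      (Leq.symm : Matrix (Fin n) (Fin n) ℝ →L[ℝ] Matrix (Fin n) (Fin n) ℝ) K := by
    have h := hsqd.to_localInverse
    rwa [hsq] at h
  have hKd : HasFDerivAt (rbfKernel σ) (GradAux.kernDeriv σ X) X :=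
    GradAux.hasFDerivAt_rbf σ hσ X
  have hKcont : ContinuousAt (rbfKernel σ) X := hKd.continuousAt
  have hgK : g K = A₀ := by
    have h := hsqd.localInverse_apply_image
    rwa [hsq] at h
  have hTend : Filter.Tendsto (fun Y => g (rbfKernel σ Y)) (nhds X) (nhds A₀) := by
    have h1 : ContinuousAt g K := hglocal.hasFDerivAt.continuousAt
    have h2 := h1.tendsto.comp hKcont.tendsto
    rwa [hgK] at h2
  -- trace as a continuous linear map
  set trCLM := LinearMap.toContinuousLinearMap
    (Matrix.traceLinearMap (Fin n) ℝ ℝ) with htr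
  have hcomp : HasFDerivAt (fun Y => (g (rbfKernel σ Y)).trace)
      (trCLM.comp ((Leq.symm : Matrix (Fin n) (Fin n) ℝ →L[ℝ] Matrix (Fin n) (Fin n) ℝ).comp
        (GradAux.kernDeriv σ X))) X :=
    (trCLM.hasFDerivAt).comp X ((hglocal.hasFDerivAt).comp X hKd)
  -- eventual equality of the two functions
  have E1 : ∀ᶠ Y in nhds X, g (rbfKernel σ Y) * g (rbfKernel σ Y) = rbfKernel σ Y := by
    have h := hsqd.eventually_right_inverse
    rw [hsq] at h
    exact hKcont.tendsto.eventually h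
  have E2 : ∀ᶠ Y in nhds X,
      ((g (rbfKernel σ Y)).IsHermitian → (g (rbfKernel σ Y)).PosDef) :=
    hTend.eventually (GradAux.eventually_posDef hA₀pd)
  have E3 : ∀ᶠ Y in nhds X, (g (rbfKernel σ Y))ᵀ = g (rbfKernel σ Y) := by
    have hleft := hsqd.eventually_left_inverse
    have htcont : Continuous (fun C : Matrix (Fin n) (Fin n) ℝ => Cᵀ) :=
      LinearMap.continuous_of_finiteDimensional
        ({ toFun := fun C : Matrix (Fin n) (Fin n) ℝ => Cᵀ
           map_add' := fun _ _ => rfl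
           map_smul' := fun _ _ => rfl } : Matrix (Fin n) (Fin n) ℝ →ₗ[ℝ] _)
    have hTendT : Filter.Tendsto (fun Y => (g (rbfKernel σ Y))ᵀ) (nhds X) (nhds A₀) := by
      have h2 := (htcont.tendsto A₀).comp hTend
      rwa [hA₀sym] at h2
    have h3 := hTendT.eventually hleft
    filter_upwards [h3, E1] with Y h3Y h1Y
    have hsqT : (g (rbfKernel σ Y))ᵀ * (g (rbfKernel σ Y))ᵀ = rbfKernel σ Y := by
      rw [← Matrix.transpose_mul, h1Y, GradAux.rbf_symm]
    rw [hsqT] at h3Y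
    exact h3Y.symm
  have hev : (fun Y : Matrix (Fin d) (Fin n) ℝ => traceSqrt (rbfKernel σ Y))
      =ᶠ[nhds X] (fun Y => (g (rbfKernel σ Y)).trace) := by
    filter_upwards [E1, E2, E3] with Y h1 h2 h3
    have hherm : (g (rbfKernel σ Y)).IsHermitian :=
      (GradAux.isHermitian_iff_transpose _).mpr h3
    have hCpd : (g (rbfKernel σ Y)).PosDef := h2 hherm
    have hCsq : (g (rbfKernel σ Y)) ^ 2 = rbfKernel σ Y := by rw [pow_two]; exact h1
    have hpsd : (rbfKernel σ Y).PosSemidef := by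
      rw [← hCsq, pow_two]
      nth_rewrite 1 [← hherm]
      exact Matrix.posSemidef_conjTranspose_mul_self _
    have hsqrt : g (rbfKernel σ Y) = hpsd.sqrt :=
      (hCpd.posSemidef).eq_sqrt_of_sq_eq hpsd hCsq
    show traceSqrt (rbfKernel σ Y) = (g (rbfKernel σ Y)).trace
    rw [traceSqrt, dif_pos hpsd, ← hsqrt]
  have hmain := hcomp.congr_of_eventuallyEq hev
  convert hmain using 1
  -- identify the two continuous linear maps
  ext V
  simp only [ContinuousLinearMap.comp_apply, htr, frobPairing,
    LinearMap.coe_toContinuousLinearMap', LinearMap.coe_mk, AddHom.coe_mk,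
    Matrix.traceLinearMap_apply]
  simp only [hLeq, ContinuousLinearEquiv.coe_coe]
  rw [GradAux.trace_sylvester_symm hA₀pd]
  set S := A₀⁻¹ with hS
  have hSsym : ∀ i j, S i j = S j i := by
    intro i j
    have h := Matrix.transpose_nonsing_inv A₀
    rw [hA₀sym] at h
    calc S i j = (A₀⁻¹ᵀ) j i := rfl
      _ = A₀⁻¹ j i := by rw [h]
  have hKsym : ∀ i j, rbfKernel σ X i j = rbfKernel σ X j i := by
    intro i j
    have h := congrFun (congrFun (GradAux.rbf_symm σ X) i) j
    exact h.symm
  set W : Matrix (Fin n) (Fin n) ℝ := Matrix.of (fun i j => S i j * rbfKernel σ X i j) with hWdef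
  have hWsym : ∀ i j, W i j = W j i := by
    intro i j
    simp only [hWdef, Matrix.of_apply]
    rw [hSsym i j, hKsym i j]
  have htrace : (S * GradAux.kernDeriv σ X V).trace
      = -(σ ^ 2)⁻¹ * ∑ i, ∑ j, W i j * ∑ a, (X a i - X a j) * (V a i - V a j) := by
    have h0 : (S * GradAux.kernDeriv σ X V).trace
        = ∑ i, ∑ j, S i j * GradAux.kernDeriv σ X V j i := by
      rfl
    rw [h0, Finset.mul_sum]
    refine Finset.sum_congr rfl fun i _ => ?_
    rw [Finset.mul_sum]
    refine Finset.sum_congr rfl fun j _ => ?_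
    rw [GradAux.kernDeriv_apply]
    rw [show (∑ a, (X a j - X a i) * (V a j - V a i))
        = ∑ a, (X a i - X a j) * (V a i - V a j) from
      Finset.sum_congr rfl fun a _ => by ring]
    simp only [hWdef, Matrix.of_apply]
    rw [← hKsym i j]
    ring
  rw [htrace, GradAux.sum_identity W hWsym X V]
  rw [show (1:ℝ)/2 * (-(σ ^ 2)⁻¹ * (2 * (∑ a, ∑ i,
        (X a i * (∑ j, W i j) - ∑ j, W i j * X a j) * V a i)))
      = -(σ ^ 2)⁻¹ * ∑ a, ∑ i, (X a i * (∑ j, W i j) - ∑ j, W i j * X a j) * V a i from by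
    ring]
  rw [Finset.mul_sum]
  refine Finset.sum_congr rfl fun a _ => ?_
  rw [Finset.mul_sum]
  refine Finset.sum_congr rfl fun i _ => ?_
  simp only [Matrix.smul_apply, Matrix.sub_apply, Matrix.mul_apply, Matrix.hadamard_apply,
    Matrix.of_apply, smul_eq_mul, hWdef]
  rw [show (∑ j, X a j * ((1/2:ℝ) * (S j i * rbfKernel σ X j i)))
      = ∑ j, X a j * ((1/2:ℝ) * (S i j * rbfKernel σ X i j)) from
    Finset.sum_congr rfl fun j _ => by rw [← hSsym i j, ← hKsym i j]]
  rw [show (∑ j, (1:ℝ) * ((1/2:ℝ) * (S j i * rbfKernel σ X j i)))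
      = ∑ j, (1:ℝ) * ((1/2:ℝ) * (S i j * rbfKernel σ X i j)) from
    Finset.sum_congr rfl fun j _ => by rw [← hSsym i j, ← hKsym i j]]
  have hσ2 : (σ:ℝ) ^ 2 ≠ 0 := by positivity
  rw [show (∑ j, X a j * ((1/2:ℝ) * (S i j * rbfKernel σ X i j)))
      = (1/2:ℝ) * ∑ j, S i j * rbfKernel σ X i j * X a j from by
    rw [Finset.mul_sum]; exact Finset.sum_congr rfl fun j _ => by ring]
  rw [show (∑ j, (1:ℝ) * ((1/2:ℝ) * (S i j * rbfKernel σ X i j)))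
      = (1/2:ℝ) * ∑ j, S i j * rbfKernel σ X i j from by
    rw [Finset.mul_sum]; exact Finset.sum_congr rfl fun j _ => by ring]
  field_simp
  ring
end
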